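/- For every positive integer p, there exists q = q(p) such that every bipartite graph G = (A, B, E) with neighbourhood diversity at least q contains an induced subgraph isomorphic to one of: the induced matching M_p (p disjoint edges), the bipartite complement of M_p, or the chain graph Z_p. -/

import Mathlib

/-- The bipartite graph on `A ⊕ B` determined by the edge relation `E : A → B → Prop`. -/
def bipGraph (A B : Type) (E : A → B → Prop) : SimpleGraph (A ⊕ B) :=
  SimpleGraph.fromRel (fun u v => ∃ a b, u = Sum.inl a ∧ v = Sum.inr b ∧ E a b)

/-- Two vertices are similar if no third vertex is adjacent to exactly one of them. -/
def GraphSimilar {V : Type} (G : SimpleGraph V) (x y : V) : Prop :=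
  ∀ z, z ≠ x → z ≠ y → (G.Adj z x ↔ G.Adj z y)

lemma pigeonBoolS {γ : Type*} (S : Finset γ) (f : γ → Bool) {m : ℕ} (h : 2*m ≤ S.card + 1) :
    ∃ b, m ≤ (S.filter (fun x => f x = b)).card := by
  by_contra hc
  push_neg at hc
  have h1 := hc true
  have h2 := hc false
  have key : (S.filter (fun x => f x = true)).card
      + (S.filter (fun x => ¬ (f x = true))).card = S.card :=
    Finset.card_filter_add_card_filter_not _
  have he : (S.filter (fun x => ¬ (f x = true))) = (S.filter (fun x => f x = false)) := by
    apply Finset.filter_congr; intro x _; simp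
  rw [he] at key
  omega

lemma trie (w : ℕ) : ∀ (k : ℕ) (F : Finset (Fin w → Bool)), 2^k ≤ F.card →
    ∃ s ∈ F, ∃ c : Fin k → Fin w, StrictMono c ∧ ∃ r : Fin k → (Fin w → Bool),
      ∀ i, r i ∈ F ∧ r i (c i) ≠ s (c i) ∧ ∀ t, t < c i → r i t = s t := by
  intro k
  induction k with
  | zero =>
    intro F hF
    have hne : F.Nonempty := Finset.card_pos.mp (by omega)
    obtain ⟨s, hs⟩ := hne
    exact ⟨s, hs, Fin.elim0, fun i => i.elim0, Fin.elim0, fun i => i.elim0⟩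
  | succ k ih =>
    intro F hF
    have h2 : 1 < F.card := by
      have : 2 ≤ 2^(k+1) := by
        calc 2 = 2^1 := by norm_num
        _ ≤ 2^(k+1) := Nat.pow_le_pow_right (by norm_num) (by omega)
      omega
    obtain ⟨u, hu, v, hv, huv⟩ := Finset.one_lt_card.mp h2
    have hdiff : ∃ t, u t ≠ v t := Function.ne_iff.mp huv
    set D : Finset (Fin w) := Finset.univ.filter
      (fun t => ∃ u ∈ F, ∃ v ∈ F, u t ≠ v t) with hD
    have hDne : D.Nonempty := by
      obtain ⟨t, ht⟩ := hdiff
      exact ⟨t, by simp [hD]; exact ⟨u, hu, v, hv, ht⟩⟩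
    set c0 := D.min' hDne with hc0
    have hc0D : c0 ∈ D := D.min'_mem hDne
    have hagree : ∀ t : Fin w, t < c0 → ∀ u' ∈ F, ∀ v' ∈ F, u' t = v' t := by
      intro t ht u' hu' v' hv'
      by_contra hne
      have : t ∈ D := by simp [hD]; exact ⟨u', hu', v', hv', hne⟩
      exact absurd (D.min'_le t this) (by omega)
    have hsplit : ∀ b, ∃ x ∈ F, x c0 = b := by
      intro b
      simp only [hD, Finset.mem_filter] at hc0D
      obtain ⟨-, u', hu', v', hv', hne⟩ := hc0D
      cases hu'c : u' c0 <;> cases hv'c : v' c0 <;> cases b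
      all_goals first
        | exact ⟨u', hu', hu'c⟩
        | exact ⟨v', hv', hv'c⟩
        | exact absurd (hu'c.trans hv'c.symm) hne
    have hbig : ∃ b, 2^k ≤ (F.filter (fun x => x c0 = b)).card := by
      apply pigeonBoolS
      have : 2^(k+1) = 2 * 2^k := by ring
      omega
    obtain ⟨b, hb⟩ := hbig
    obtain ⟨s, hs, c', hc', r', hr'⟩ := ih (F.filter (fun x => x c0 = b)) hb
    have hsF : s ∈ F := (Finset.mem_filter.mp hs).1
    have hsc0 : s c0 = b := (Finset.mem_filter.mp hs).2
    obtain ⟨r0, hr0F, hr0c0⟩ := hsplit (!b)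
    have hc0lt : ∀ i, c0 < c' i := by
      intro i
      obtain ⟨hriF, hrine, _⟩ := hr' i
      have hriF' : r' i ∈ F := (Finset.mem_filter.mp hriF).1
      have hric0 : r' i c0 = b := (Finset.mem_filter.mp hriF).2
      rcases lt_trichotomy c0 (c' i) with h | h | h
      · exact h
      · exact absurd (h ▸ (hric0.trans hsc0.symm)) hrine
      · exact absurd (hagree _ h _ hriF' _ hsF) hrine
    refine ⟨s, hsF, Fin.cons c0 c', ?_, Fin.cons r0 r', ?_⟩
    · intro i j hij
      induction j using Fin.cases with
      | zero => exact absurd hij (by simp [Fin.lt_def])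
      | succ j =>
        induction i using Fin.cases with
        | zero => simpa using hc0lt j
        | succ i =>
          simp only [Fin.cons_succ]
          exact hc' (by exact Fin.succ_lt_succ_iff.mp hij)
    · intro i
      induction i using Fin.cases with
      | zero =>
        refine ⟨hr0F, ?_, ?_⟩
        · simp only [Fin.cons_zero]
          rw [hr0c0, hsc0]
          simp
        · intro t ht
          simp only [Fin.cons_zero] at ht ⊢
          exact hagree t ht _ hr0F _ hsF
      | succ i =>
        obtain ⟨hriF, h1, h2⟩ := hr' i
        exact ⟨(Finset.mem_filter.mp hriF).1, by simpa using h1, by simpa using h2⟩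

lemma step (n : ℕ) : ∀ (k : ℕ) (F : Finset (Fin n)) (col : Fin n → Fin n → Bool),
    2^k ≤ F.card → ∃ v : Fin k → Fin n, StrictMono v ∧ (∀ t, v t ∈ F) ∧
      ∃ χ : Fin k → Bool, ∀ a b : Fin k, a < b → col (v a) (v b) = χ a := by
  intro k
  induction k with
  | zero =>
    intro F col _
    exact ⟨Fin.elim0, fun i => i.elim0, fun i => i.elim0, Fin.elim0, fun i => i.elim0⟩
  | succ k ih =>
    intro F col hF
    have hone : 1 ≤ F.card := le_trans (Nat.one_le_two_pow) hF
    have hne : F.Nonempty := Finset.card_pos.mp hone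
    set x := F.min' hne with hx
    have hxF : x ∈ F := F.min'_mem hne
    have hcard : 2 * 2^k ≤ (F.erase x).card + 1 := by
      rw [Finset.card_erase_of_mem hxF]
      have : 2^(k+1) = 2*2^k := by ring
      omega
    obtain ⟨b, hb⟩ := pigeonBoolS (F.erase x) (fun z => col x z) hcard
    obtain ⟨v', hsm, hmem, χ', hχ⟩ := ih ((F.erase x).filter (fun z => col x z = b)) col hb
    have hv'x : ∀ t, x < v' t := by
      intro t
      have h1 := hmem t
      simp only [Finset.mem_filter, Finset.mem_erase] at h1
      exact lt_of_le_of_ne (F.min'_le _ h1.1.2) (Ne.symm h1.1.1)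
    refine ⟨Fin.cons x v', ?_, ?_, Fin.cons b χ', ?_⟩
    · intro i j hij
      induction j using Fin.cases with
      | zero => exact absurd hij (by simp [Fin.lt_def])
      | succ j =>
        induction i using Fin.cases with
        | zero => simpa using hv'x j
        | succ i =>
          simp only [Fin.cons_succ]
          exact hsm (Fin.succ_lt_succ_iff.mp hij)
    · intro t
      induction t using Fin.cases with
      | zero => simpa using hxF
      | succ t =>
        have h1 := hmem t
        simp only [Finset.mem_filter, Finset.mem_erase] at h1
        simpa using h1.1.2
    · intro a c hac
      induction c using Fin.cases with
      | zero => exact absurd hac (by simp [Fin.lt_def])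
      | succ c =>
        induction a using Fin.cases with
        | zero =>
          have h1 := hmem c
          simp only [Finset.mem_filter] at h1
          simpa using h1.2
        | succ a =>
          simpa using hχ a c (Fin.succ_lt_succ_iff.mp hac)

lemma core (p : ℕ) (hp : 0 < p) (α β : Type) (R : α → β → Prop) (N : ℕ)
    (hN : 2^(2^(2*p+3)) ≤ N) (a : Fin N → α)
    (ha : ∀ i j : Fin N, i ≠ j → ∃ b, ¬(R (a i) b ↔ R (a j) b)) :
    ∃ (x : Fin p → α) (y : Fin p → β),
      (∀ i j, R (x i) (y j) ↔ i = j) ∨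
      (∀ i j, R (x i) (y j) ↔ i ≠ j) ∨
      (∀ i j : Fin p, R (x i) (y j) ↔ p ≤ (i:ℕ)+(j:ℕ)+1) := by
  classical
  have hN2 : 2 ≤ N := by
    have h1 : 2^1 ≤ 2^(2^(2*p+3)) := Nat.pow_le_pow_right (by norm_num) Nat.one_le_two_pow
    omega
  have h01 : (⟨0, by omega⟩ : Fin N) ≠ ⟨1, by omega⟩ := by simp [Fin.ext_iff]
  have hwit : ∀ i j : Fin N, ∃ b : β, i ≠ j → ¬(R (a i) b ↔ R (a j) b) := by
    intro i j
    by_cases h : i = j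
    · obtain ⟨b, _⟩ := ha _ _ h01
      exact ⟨b, fun h' => absurd h h'⟩
    · obtain ⟨b, hb⟩ := ha i j h
      exact ⟨b, fun _ => hb⟩
  choose wit hwitp using hwit
  set w := N * N with hw
  set colfun : Fin w → β :=
    fun t => wit (finProdFinEquiv.symm t).1 (finProdFinEquiv.symm t).2 with hcolfun
  set str : Fin N → (Fin w → Bool) := fun i t => decide (R (a i) (colfun t)) with hstr
  have hstrinj : Function.Injective str := by
    intro i j hij
    by_contra hne
    have hb := hwitp i j hne
    set t : Fin w := finProdFinEquiv (i, j) with ht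
    have h1 : str i t = str j t := congrFun hij t
    have h2 : colfun t = wit i j := by
      have h3 : finProdFinEquiv.symm t = (i, j) := by rw [ht, Equiv.symm_apply_apply]
      rw [hcolfun]
      simp only [h3]
    have h1' : decide (R (a i) (colfun t)) = decide (R (a j) (colfun t)) := h1
    rw [h2] at h1'
    by_cases hA : R (a i) (wit i j) <;> by_cases hB : R (a j) (wit i j)
    · exact hb ⟨fun _ => hB, fun _ => hA⟩
    · simp [hA, hB] at h1'
    · simp [hA, hB] at h1'
    · exact hb ⟨fun h => absurd h hA, fun h => absurd h hB⟩
  set F : Finset (Fin w → Bool) := Finset.image str Finset.univ with hF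
  have hFcard : F.card = N := by
    rw [hF, Finset.card_image_of_injective _ hstrinj, Finset.card_univ, Fintype.card_fin]
  set k3 := 2*p+2 with hk3
  set k2 := 2^(k3+1) with hk2
  obtain ⟨s, hs, c, hc, r, hr⟩ := trie w k2 F (by rw [hFcard]; simpa [hk2, hk3] using hN)
  obtain ⟨ε, hε⟩ := pigeonBoolS (Finset.univ : Finset (Fin k2)) (fun i => s (c i))
    (m := 2^k3) (by simp [hk2]; omega)
  obtain ⟨v, hvsm, hvmem, χ, hχ⟩ := step k2 k3 _ (fun u t => r u (c t)) hε
  obtain ⟨χ0, hχ0⟩ := pigeonBoolS (Finset.univ : Finset (Fin k3)) χ (m := p+1)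
    (by simp [hk3]; omega)
  set ι2 := Finset.orderEmbOfCardLe _ hχ0 with hι2
  set ρ : Fin (p+1) → Fin k2 := fun t => v (ι2 t) with hρ
  have hρsm : StrictMono ρ := fun i j hij => hvsm (ι2.strictMono hij)
  have hεP : ∀ t, s (c (ρ t)) = ε := by
    intro t
    have := hvmem (ι2 t)
    simp only [Finset.mem_filter] at this
    exact this.2
  have hχP : ∀ t, χ (ι2 t) = χ0 := by
    intro t
    have := Finset.orderEmbOfCardLe_mem _ hχ0 t
    simp only [Finset.mem_filter] at this
    exact this.2
  -- matrix facts
  have Mlt : ∀ t u : Fin (p+1), u < t → r (ρ t) (c (ρ u)) = ε := by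
    intro t u htu
    have h1 := (hr (ρ t)).2.2 (c (ρ u)) (hc (hρsm htu))
    rw [h1, hεP]
  have Meq : ∀ t : Fin (p+1), r (ρ t) (c (ρ t)) = !ε := by
    intro t
    have h1 := (hr (ρ t)).2.1
    rw [hεP] at h1
    cases hh : r (ρ t) (c (ρ t)) <;> cases ε <;> simp_all
  have Mgt : ∀ t u : Fin (p+1), t < u → r (ρ t) (c (ρ u)) = χ0 := by
    intro t u htu
    have h1 := hχ (ι2 t) (ι2 u) (ι2.strictMono htu)
    rw [h1, hχP]
  have hIdx : ∀ t : Fin (p+1), ∃ i, str i = r (ρ t) := by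
    intro t
    have := (hr (ρ t)).1
    rw [hF] at this
    simp only [Finset.mem_image, Finset.mem_univ, true_and] at this
    exact this
  choose I hI using hIdx
  have hRR : ∀ t u : Fin (p+1), R (a (I t)) (colfun (c (ρ u))) ↔ r (ρ t) (c (ρ u)) = true := by
    intro t u
    rw [← hI t]
    simp [hstr]
  -- case analysis
  cases hε' : ε <;> cases hχ0' : χ0
  · -- ε = false, χ0 = false : identity
    refine ⟨fun i => a (I i.castSucc), fun j => colfun (c (ρ j.castSucc)), Or.inl ?_⟩
    intro i j
    rw [hRR]
    rcases lt_trichotomy i j with h | h | h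
    · rw [Mgt _ _ (Fin.castSucc_lt_castSucc_iff.mpr h), hχ0']
      exact iff_of_false (by simp) h.ne
    · subst h
      rw [Meq, hε']
      simp
    · rw [Mlt _ _ (Fin.castSucc_lt_castSucc_iff.mpr h), hε']
      exact iff_of_false (by simp) h.ne'
  · -- ε = false, χ0 = true : upper staircase, t ≤ u
    refine ⟨fun i => a (I ⟨p-1-(i:ℕ), by omega⟩), fun j => colfun (c (ρ j.castSucc)),
      Or.inr (Or.inr ?_)⟩
    intro i j
    have hi2 := i.isLt
    have hj2 := j.isLt
    rw [hRR]
    rcases lt_trichotomy (p-1-(i:ℕ)) ((j:ℕ)) with h | h | h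
    · rw [Mgt _ _ (by simp [Fin.lt_def]; omega), hχ0']
      exact iff_of_true rfl (by omega)
    · rw [(by simp [Fin.ext_iff]; omega :
        (⟨p-1-(i:ℕ), by omega⟩ : Fin (p+1)) = j.castSucc), Meq, hε']
      exact iff_of_true (by simp) (by omega)
    · rw [Mlt _ _ (by simp [Fin.lt_def]; omega), hε']
      exact iff_of_false (by simp) (by omega)
  · -- ε = true, χ0 = false : lower strict staircase, u < t
    refine ⟨fun i => a (I ⟨(i:ℕ)+1, by omega⟩), fun j => colfun (c (ρ ⟨p-1-(j:ℕ), by omega⟩)),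
      Or.inr (Or.inr ?_)⟩
    intro i j
    have hi2 := i.isLt
    have hj2 := j.isLt
    rw [hRR]
    rcases lt_trichotomy (p-1-(j:ℕ)) ((i:ℕ)+1) with h | h | h
    · rw [Mlt _ _ (by simp [Fin.lt_def]; omega), hε']
      exact iff_of_true rfl (by omega)
    · rw [(by simp [Fin.ext_iff]; omega :
        (⟨p-1-(j:ℕ), by omega⟩ : Fin (p+1)) = ⟨(i:ℕ)+1, by omega⟩), Meq, hε']
      exact iff_of_false (by simp) (by omega)
    · rw [Mgt _ _ (by simp [Fin.lt_def]; omega), hχ0']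
      exact iff_of_false (by simp) (by omega)
  · -- ε = true, χ0 = true : co-identity
    refine ⟨fun i => a (I i.castSucc), fun j => colfun (c (ρ j.castSucc)), Or.inr (Or.inl ?_)⟩
    intro i j
    rw [hRR]
    rcases lt_trichotomy i j with h | h | h
    · rw [Mgt _ _ (Fin.castSucc_lt_castSucc_iff.mpr h), hχ0']
      exact iff_of_true rfl h.ne
    · subst h
      rw [Meq, hε']
      exact iff_of_false (by simp) (by simp)
    · rw [Mlt _ _ (Fin.castSucc_lt_castSucc_iff.mpr h), hε']
      exact iff_of_true rfl h.ne'

lemma simL {A B : Type} (E : A → B → Prop) (a a' : A)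
    (h : ∀ b, E a b ↔ E a' b) : GraphSimilar (bipGraph A B E) (Sum.inl a) (Sum.inl a') := by
  intro z _ _
  cases z with
  | inl a'' => simp [bipGraph, SimpleGraph.fromRel_adj]
  | inr b =>
    simp only [bipGraph, SimpleGraph.fromRel_adj]
    constructor
    · rintro ⟨-, h1 | h1⟩
      · obtain ⟨_, _, h2, _⟩ := h1
        exact absurd h2 (by simp)
      · obtain ⟨a2, b2, h2, h3, h4⟩ := h1
        refine ⟨by simp, Or.inr ⟨a', b, rfl, rfl, ?_⟩⟩
        obtain ⟨rfl⟩ := Sum.inl.inj h2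
        obtain ⟨rfl⟩ := Sum.inr.inj h3
        exact (h b).mp h4
    · rintro ⟨-, h1 | h1⟩
      · obtain ⟨_, _, h2, _⟩ := h1
        exact absurd h2 (by simp)
      · obtain ⟨a2, b2, h2, h3, h4⟩ := h1
        refine ⟨by simp, Or.inr ⟨a, b, rfl, rfl, ?_⟩⟩
        obtain ⟨rfl⟩ := Sum.inl.inj h2
        obtain ⟨rfl⟩ := Sum.inr.inj h3
        exact (h b).mpr h4

lemma simR {A B : Type} (E : A → B → Prop) (b b' : B)
    (h : ∀ a, E a b ↔ E a b') : GraphSimilar (bipGraph A B E) (Sum.inr b) (Sum.inr b') := by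
  intro z _ _
  cases z with
  | inr b'' => simp [bipGraph, SimpleGraph.fromRel_adj]
  | inl a =>
    simp only [bipGraph, SimpleGraph.fromRel_adj]
    constructor
    · rintro ⟨-, h1 | h1⟩
      · obtain ⟨a2, b2, h2, h3, h4⟩ := h1
        refine ⟨by simp, Or.inl ⟨a, b', rfl, rfl, ?_⟩⟩
        obtain ⟨rfl⟩ := Sum.inl.inj h2
        obtain ⟨rfl⟩ := Sum.inr.inj h3
        exact (h a).mp h4
      · obtain ⟨_, _, _, h2, _⟩ := h1
        exact absurd h2 (by simp)
    · rintro ⟨-, h1 | h1⟩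
      · obtain ⟨a2, b2, h2, h3, h4⟩ := h1
        refine ⟨by simp, Or.inl ⟨a, b, rfl, rfl, ?_⟩⟩
        obtain ⟨rfl⟩ := Sum.inl.inj h2
        obtain ⟨rfl⟩ := Sum.inr.inj h3
        exact (h a).mpr h4
      · obtain ⟨_, _, _, h2, _⟩ := h1
        exact absurd h2 (by simp)

lemma buildEmb {α β : Type} {p : ℕ} (hp : 0 < p) (E : α → β → Prop)
    (x : Fin p → α) (y : Fin p → β)
    (h : (∀ i j, E (x i) (y j) ↔ i = j) ∨ (∀ i j, E (x i) (y j) ↔ i ≠ j) ∨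
      (∀ i j : Fin p, E (x i) (y j) ↔ p ≤ (i:ℕ)+(j:ℕ)+1)) :
    ∃ (x' : Fin p ↪ α) (y' : Fin p ↪ β),
      (∀ i j, E (x' i) (y' j) ↔ i = j) ∨ (∀ i j, E (x' i) (y' j) ↔ i ≠ j) ∨
      (∀ i j : Fin p, E (x' i) (y' j) ↔ p ≤ (i:ℕ)+(j:ℕ)+1) := by
  rcases h with h | h | h
  · refine ⟨⟨x, ?_⟩, ⟨y, ?_⟩, Or.inl h⟩
    · intro i i' he
      have t1 : E (x i) (y i) := (h i i).mpr rfl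
      rw [he] at t1
      exact ((h i' i).mp t1).symm
    · intro j j' he
      have t1 : E (x j) (y j) := (h j j).mpr rfl
      rw [he] at t1
      exact (h j j').mp t1
  · refine ⟨⟨x, ?_⟩, ⟨y, ?_⟩, Or.inr (Or.inl h)⟩
    · intro i i' he
      by_contra hne
      have t1 : E (x i') (y i) := (h i' i).mpr (Ne.symm hne)
      rw [← he] at t1
      exact (h i i).mp t1 rfl
    · intro j j' he
      by_contra hne
      have t1 : E (x j) (y j') := (h j j').mpr hne
      rw [← he] at t1
      exact (h j j).mp t1 rfl
  · refine ⟨⟨x, ?_⟩, ⟨y, ?_⟩, Or.inr (Or.inr h)⟩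
    · intro i i' he
      by_contra hne
      have hne' : (i:ℕ) ≠ (i':ℕ) := fun hh => hne (Fin.ext hh)
      have hi := i.isLt
      have hi' := i'.isLt
      rcases Nat.lt_or_ge (i:ℕ) (i':ℕ) with hlt | hge
      · have t1 : E (x i') (y ⟨p-1-(i':ℕ), by omega⟩) := (h i' _).mpr (by simp; omega)
        rw [← he] at t1
        have t2 := (h i _).mp t1
        simp at t2
        omega
      · have t1 : E (x i) (y ⟨p-1-(i:ℕ), by omega⟩) := (h i _).mpr (by simp; omega)
        rw [he] at t1
        have t2 := (h i' _).mp t1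
        simp at t2
        omega
    · intro j j' he
      by_contra hne
      have hne' : (j:ℕ) ≠ (j':ℕ) := fun hh => hne (Fin.ext hh)
      have hj := j.isLt
      have hj' := j'.isLt
      rcases Nat.lt_or_ge (j:ℕ) (j':ℕ) with hlt | hge
      · have t1 : E (x ⟨p-1-(j':ℕ), by omega⟩) (y j') := (h _ j').mpr (by simp; omega)
        rw [← he] at t1
        have t2 := (h _ j).mp t1
        simp at t2
        omega
      · have t1 : E (x ⟨p-1-(j:ℕ), by omega⟩) (y j) := (h _ j).mpr (by simp; omega)
        rw [he] at t1
        have t2 := (h _ j').mp t1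
        simp at t2
        omega

/-- For every positive integer `p` there is `q` such that every bipartite graph of
neighbourhood diversity at least `q` (i.e. containing `q` pairwise non-similar vertices)
contains, as an induced sub-bipartite-graph, the matching `M_p` (`x_i` adjacent to `y_j`
iff `i = j`), its bipartite complement (`i ≠ j`), or the chain graph `Z_p`
(`x_i` adjacent to `y_j` iff `(i+1) + (j+1) ≥ p + 1`, 0-indexed). -/
theorem diversity_unavoidable_bipartite (p : ℕ) (hp : 0 < p) :
    ∃ q : ℕ, ∀ (A B : Type) (E : A → B → Prop),
      (∃ f : Fin q ↪ (A ⊕ B),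
        ∀ i j, i ≠ j → ¬ GraphSimilar (bipGraph A B E) (f i) (f j)) →
      ∃ (x : Fin p ↪ A) (y : Fin p ↪ B),
        (∀ i j, E (x i) (y j) ↔ i = j) ∨
        (∀ i j, E (x i) (y j) ↔ i ≠ j) ∨
        (∀ i j : Fin p, E (x i) (y j) ↔ p ≤ (i : ℕ) + (j : ℕ) + 1) := by
  classical
  refine ⟨2 * 2^(2^(2*p+3)), ?_⟩
  intro A B E ⟨f, hf⟩
  have hN' : 0 < 2^(2^(2*p+3)) := Nat.pow_pos (by norm_num)
  obtain ⟨bb, hbb⟩ := pigeonBoolS (Finset.univ : Finset (Fin (2*2^(2^(2*p+3)))))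
    (fun i => (f i).isLeft) (m := 2^(2^(2*p+3))) (by simp)
  set ι := Finset.orderEmbOfCardLe _ hbb with hι
  have hmem : ∀ t : Fin (2^(2^(2*p+3))), (f (ι t)).isLeft = bb := by
    intro t
    have := Finset.orderEmbOfCardLe_mem _ hbb t
    exact (Finset.mem_filter.mp this).2
  cases bb
  · -- right side
    have hex : ∀ t, ∃ b : B, f (ι t) = Sum.inr b := by
      intro t
      have h1 := hmem t
      cases hft : f (ι t) with
      | inl a => rw [hft] at h1; simp at h1
      | inr b => exact ⟨b, rfl⟩
    choose g hg using hex
    have hdist : ∀ i j : Fin (2^(2^(2*p+3))), i ≠ j →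
        ∃ aa, ¬((fun y x => E x y) (g i) aa ↔ (fun y x => E x y) (g j) aa) := by
      intro i j hij
      by_contra hcon
      push_neg at hcon
      refine hf (ι i) (ι j) (fun hh => hij (ι.injective hh)) ?_
      rw [hg i, hg j]
      exact simR E (g i) (g j) (fun aa => hcon aa)
    obtain ⟨x0, y0, hpat⟩ := core p hp B A (fun y x => E x y) (2^(2^(2*p+3))) le_rfl g hdist
    refine buildEmb hp E y0 x0 ?_
    rcases hpat with h | h | h
    · refine Or.inl fun i j => ?_
      rw [h j i]
      exact eq_comm
    · refine Or.inr (Or.inl fun i j => ?_)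
      rw [h j i]
      exact ne_comm
    · refine Or.inr (Or.inr fun i j => ?_)
      rw [h j i]
      constructor <;> (intro; omega)
  · -- left side
    have hex : ∀ t, ∃ a : A, f (ι t) = Sum.inl a := by
      intro t
      have h1 := hmem t
      cases hft : f (ι t) with
      | inr b => rw [hft] at h1; simp at h1
      | inl a => exact ⟨a, rfl⟩
    choose g hg using hex
    have hdist : ∀ i j : Fin (2^(2^(2*p+3))), i ≠ j → ∃ bbb, ¬(E (g i) bbb ↔ E (g j) bbb) := by
      intro i j hij
      by_contra hcon
      push_neg at hcon
      refine hf (ι i) (ι j) (fun hh => hij (ι.injective hh)) ?_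
      rw [hg i, hg j]
      exact simL E (g i) (g j) (fun bbb => hcon bbb)
    obtain ⟨x0, y0, hpat⟩ := core p hp A B E (2^(2^(2*p+3))) le_rfl g hdist
    exact buildEmb hp E x0 y0 hpat
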